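/- Let α > −1 and K ≥ 1. Setting φ_i = i−1 for i ≥ 1, the generalized Bell polynomial with parameters r = α+1, φ, ψ = 0 satisfies ℬ_n^{α+1;φ,0}(x) = (−1)^n L̂_n^α(x), where L̂_n^α is the monic Laguerre polynomial. -/
import Mathlib


open Polynomial Finset

/-- The standard (generalized) Laguerre polynomial `L_n^α`. -/
noncomputable def laguerre (α : ℝ) (n : ℕ) : Polynomial ℝ :=
  ∑ k ∈ Finset.range (n + 1),
    Polynomial.C ((-1 : ℝ) ^ k * (ascPochhammer ℝ (n - k)).eval (α + k + 1) /
      ((n - k).factorial * k.factorial)) * Polynomial.X ^ k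

/-- The monic Laguerre polynomial `L̂_n^α = (-1)^n n! L_n^α`. -/
noncomputable def monicLaguerre (α : ℝ) (n : ℕ) : Polynomial ℝ :=
  Polynomial.C ((-1 : ℝ) ^ n * n.factorial) * laguerre α n

/-- The Laguerre polynomial normalized to take the value 1 at 0:
`𝔏_n^α = (n!/(1+α)_n) L_n^α`. -/
noncomputable def laguerreOne (α : ℝ) (n : ℕ) : Polynomial ℝ :=
  Polynomial.C ((n.factorial : ℝ) / (ascPochhammer ℝ n).eval (1 + α)) * laguerre α n

/-- The Brenke normalization `ℓ_n^α = L_n^α/(1+α)_n`. -/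
noncomputable def laguerreBrenke (α : ℝ) (n : ℕ) : Polynomial ℝ :=
  Polynomial.C (1 / (ascPochhammer ℝ n).eval (1 + α)) * laguerre α n

/-- Coefficients of the sign-adjusted monic Laguerre polynomial. -/
noncomputable def cc (α : ℝ) (n k : ℕ) : ℝ :=
  (-1)^k * n.factorial * (ascPochhammer ℝ (n-k)).eval (α+k+1) / ((n-k).factorial * k.factorial)

lemma evP_r (m : ℕ) (x : ℝ) :
    (ascPochhammer ℝ (m+1)).eval x = (ascPochhammer ℝ m).eval x * (x + m) := by
  rw [ascPochhammer_succ_right]; simp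

lemma evP_l (m : ℕ) (x : ℝ) :
    (ascPochhammer ℝ (m+1)).eval x = x * (ascPochhammer ℝ m).eval (x+1) := by
  rw [ascPochhammer_succ_left]; simp

lemma coeff_M (α : ℝ) (n k : ℕ) :
    (Polynomial.C ((-1 : ℝ) ^ n) * monicLaguerre α n).coeff k =
      if k ≤ n then cc α n k else 0 := by
  unfold monicLaguerre laguerre cc
  rw [← mul_assoc, ← C_mul, ← mul_assoc, ← pow_add, Even.neg_one_pow ⟨n, by ring⟩, one_mul,
    Finset.mul_sum]
  simp only [← mul_assoc, ← C_mul]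
  rw [finset_sum_coeff]
  simp only [coeff_C_mul, coeff_X_pow, mul_ite, mul_one, mul_zero]
  rw [Finset.sum_ite_eq (Finset.range (n+1)) k]
  simp only [Finset.mem_range, Nat.lt_succ_iff]
  split
  · ring
  · rfl

lemma cc_zero (α : ℝ) (n : ℕ) : cc α (n+1) 0 = (α + 1 + n) * cc α n 0 := by
  unfold cc
  rw [Nat.sub_zero, Nat.sub_zero, evP_r, Nat.factorial_succ]
  have h2 : (n.factorial : ℝ) ≠ 0 := Nat.cast_ne_zero.mpr n.factorial_ne_zero
  push_cast
  field_simp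
  ring

lemma cc_self (α : ℝ) (n : ℕ) : cc α n n = (-1)^n := by
  have h2 : (n.factorial : ℝ) ≠ 0 := Nat.cast_ne_zero.mpr n.factorial_ne_zero
  unfold cc
  rw [Nat.sub_self]
  simp only [ascPochhammer_zero, Polynomial.eval_one, Nat.factorial_zero, Nat.cast_one, one_mul,
    mul_one]
  field_simp

lemma cc_key (α : ℝ) (j m : ℕ) :
    cc α (j+1+m+1) (j+1) =
      ((j:ℝ)+1) * cc α (j+1+m) (j+1) + (α + 1 + ((j:ℝ)+1+m)) * cc α (j+1+m) (j+1)
        - cc α (j+1+m) j := by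
  unfold cc
  have h1 : j+1+m+1 - (j+1) = m+1 := by omega
  have h2 : j+1+m - (j+1) = m := by omega
  have h3 : j+1+m - j = m+1 := by omega
  rw [h1, h2, h3, show j+1+m+1 = (j+1+m)+1 from rfl, Nat.factorial_succ (j+1+m),
    Nat.factorial_succ m, Nat.factorial_succ j]
  push_cast
  rw [evP_r (x := α + ((j:ℝ) + 1) + 1), evP_l (x := α + (j:ℝ) + 1),
    show α + (j:ℝ) + 1 + 1 = α + ((j:ℝ)+1) + 1 by ring]
  have hm : (m.factorial : ℝ) ≠ 0 := Nat.cast_ne_zero.mpr m.factorial_ne_zero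
  have hj : (j.factorial : ℝ) ≠ 0 := Nat.cast_ne_zero.mpr j.factorial_ne_zero
  have hjm : ((j+1+m).factorial : ℝ) ≠ 0 := Nat.cast_ne_zero.mpr (j+1+m).factorial_ne_zero
  have hm1 : ((m:ℝ)+1) ≠ 0 := by positivity
  have hj1 : ((j:ℝ)+1) ≠ 0 := by positivity
  rw [pow_succ]
  field_simp
  ring

lemma M_rec (α : ℝ) (n : ℕ) :
    Polynomial.C ((-1 : ℝ) ^ (n+1)) * monicLaguerre α (n+1) =
      Polynomial.X * Polynomial.derivative (Polynomial.C ((-1 : ℝ) ^ n) * monicLaguerre α n)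
      + (Polynomial.C (α + 1 + (n : ℝ)) - Polynomial.X)
        * (Polynomial.C ((-1 : ℝ) ^ n) * monicLaguerre α n) := by
  have hx0 : ∀ q : Polynomial ℝ, (Polynomial.X * q).coeff 0 = 0 := by
    intro q; rw [Polynomial.mul_coeff_zero, Polynomial.coeff_X_zero, zero_mul]
  ext k
  rw [coeff_M, coeff_add, sub_mul, coeff_sub, coeff_C_mul]
  match k with
  | 0 =>
    rw [hx0, hx0, coeff_M]
    simp only [Nat.zero_le, if_true, cc_zero, sub_zero, zero_add]
  | k+1 =>
    rw [Polynomial.coeff_X_mul, Polynomial.coeff_X_mul, Polynomial.coeff_derivative]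
    simp only [coeff_M]
    rcases lt_trichotomy k n with h | h | h
    · obtain ⟨m, rfl⟩ : ∃ m, n = k + 1 + m := ⟨n - (k+1), by omega⟩
      rw [if_pos (by omega), if_pos (by omega), if_pos (by omega)]
      have := cc_key α k m
      push_cast at this ⊢
      rw [this]
      ring
    · subst h
      rw [if_pos (by omega), if_neg (by omega), if_pos (by omega)]
      rw [cc_self, cc_self]
      push_cast
      rw [pow_succ]
      ring
    · rw [if_neg (by omega), if_neg (by omega), if_neg (by omega)]
      ring

/-- With `φ_i = i - 1`, the generalized Bell polynomials with parameters
`r = α + 1`, `φ`, `ψ = 0` are the (sign-adjusted) monic Laguerre polynomials: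
`ℬ_n^{α+1;φ,0} = (-1)^n L̂_n^α`. -/
theorem stmt_11 (α : ℝ) (hα : -1 < α)
    (B : ℕ → Polynomial ℝ) (hB0 : B 0 = 1)
    (hBrec : ∀ n : ℕ, B (n + 1) = Polynomial.X * Polynomial.derivative (B n)
        + (Polynomial.C (α + 1 + (n : ℝ)) - Polynomial.X) * B n) :
    ∀ n, B n = Polynomial.C ((-1 : ℝ) ^ n) * monicLaguerre α n := by
  intro n
  induction n with
  | zero =>
    rw [hB0]
    unfold monicLaguerre laguerre
    simp
  | succ n ih =>
    rw [hBrec n, ih, M_rec]
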